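/- In the Sleeping Beauty problem with Prince, when SSA without SIA is applied with the reference class of all wakenings by all humans with a large number N of other wakenings, the answers converge to the FNC answers: the sequence a_N = (1/(N+3)) / (1/(N+3) + 2/(N+4)) converges to 1/3 as N → ∞, and the sequence b_N = (2/(N+3)) / (2/(N+3) + 2/(N+4)) converges to 1/2 as N → ∞. -/
import Mathlib


open Filter

lemma aux_tendsto (a b c d : ℝ) (ha : 0 < a) :
    Tendsto (fun N : ℕ => c + d * (a * (N : ℝ) + b)⁻¹) atTop (nhds c) := by
  have ht : Tendsto (fun N : ℕ => a * (N : ℝ) + b) atTop atTop :=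
    tendsto_atTop_add_const_right _ b
      (tendsto_natCast_atTop_atTop.const_mul_atTop ha)
  have h0 : Tendsto (fun N : ℕ => (a * (N : ℝ) + b)⁻¹) atTop (nhds 0) :=
    ht.inv_tendsto_atTop
  simpa using tendsto_const_nhds.add (h0.const_mul d)

/-- With a large reference class of N extra wakenings, the SSA−SIA answers in
the Sleeping Beauty with Prince problem converge to the FNC answers: Beauty's
probability of Heads a_N → 1/3 and the Prince's probability of Heads b_N → 1/2
as N → ∞. -/
theorem beauty_and_prince_large_reference_class_limits :
    Tendsto
      (fun N : ℕ =>
        (1 / ((N : ℝ) + 3)) / (1 / ((N : ℝ) + 3) + 2 / ((N : ℝ) + 4)))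
      atTop (nhds (1 / 3)) ∧
    Tendsto
      (fun N : ℕ =>
        (2 / ((N : ℝ) + 3)) / (2 / ((N : ℝ) + 3) + 2 / ((N : ℝ) + 4)))
      atTop (nhds (1 / 2)) := by
  have hn : ∀ N : ℕ, (0:ℝ) < (N:ℝ) + 3 := fun N => by positivity
  have hm : ∀ N : ℕ, (0:ℝ) < (N:ℝ) + 4 := fun N => by positivity
  constructor
  · have h2 : Tendsto (fun N : ℕ => (1:ℝ)/3 + 2/3 * (3 * ((N:ℝ)) + 10)⁻¹) atTop (nhds (1/3)) :=
      aux_tendsto 3 10 (1/3) (2/3) (by norm_num)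
    refine h2.congr fun N => ?_
    have h3 := (hn N).ne'
    have h4 := (hm N).ne'
    have h5 : (3:ℝ) * N + 10 ≠ 0 := by positivity
    field_simp
    ring
  · have h2 : Tendsto (fun N : ℕ => (1:ℝ)/2 + 1/2 * (2 * ((N:ℝ)) + 7)⁻¹) atTop (nhds (1/2)) :=
      aux_tendsto 2 7 (1/2) (1/2) (by norm_num)
    refine h2.congr fun N => ?_
    have h3 := (hn N).ne'
    have h4 := (hm N).ne'
    have h5 : (2:ℝ) * N + 7 ≠ 0 := by positivity
    field_simp
    ring
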